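/- If τ is a monochromatic vertex-disconnection coloring (MVD-coloring) of a graph G, then the restriction of τ to any induced subgraph G[S] is an MVD-coloring of G[S]. -/

import Mathlib

open SimpleGraph

variable {V : Type*}

/-- `S` is a set of vertices (not containing `x` or `y`) whose removal separates `x` from `y`:
every walk from `x` to `y` meets `S`. -/
def IsSepSet (G : SimpleGraph V) (S : Set V) (x y : V) : Prop :=
  x ∉ S ∧ y ∉ S ∧ ∀ p : G.Walk x y, ∃ v ∈ p.support, v ∈ S

/-- `τ` is an MVD-coloring of `G`: every pair of distinct nonadjacent vertices is
separated by a monochromatic vertex cut. -/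
def IsMVDColoring (G : SimpleGraph V) (τ : V → ℕ) : Prop :=
  ∀ x y : V, x ≠ y → ¬ G.Adj x y →
    ∃ S : Set V, IsSepSet G S x y ∧ ∀ u ∈ S, ∀ w ∈ S, τ u = τ w

/-- The monochromatic vertex-disconnection number: the maximum number of colors
used by an MVD-coloring of `G`. -/
noncomputable def mvd (G : SimpleGraph V) : ℕ :=
  sSup {k | ∃ τ : V → ℕ, IsMVDColoring G τ ∧ (Set.range τ).ncard = k}

theorem restriction_of_MVD_coloring_is_MVD (G : SimpleGraph V) (τ : V → ℕ)
    (h : IsMVDColoring G τ) (S : Set V) :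
    IsMVDColoring (G.induce S) (fun v => τ v.1) := by
  intro x y hxy hadj
  obtain ⟨T, ⟨hxT, hyT, hsep⟩, hmono⟩ :=
    h x.1 y.1 (fun e => hxy (Subtype.ext e)) hadj
  refine ⟨{v : S | v.1 ∈ T}, ⟨hxT, hyT, ?_⟩, fun u hu w hw => hmono u.1 hu w.1 hw⟩
  intro p
  obtain ⟨v, hv, hvT⟩ := hsep (p.map (SimpleGraph.Embedding.induce S).toHom)
  replace hv : v ∈ (p.map (SimpleGraph.Embedding.induce S).toHom).support := hv
  rw [SimpleGraph.Walk.support_map, List.mem_map] at hv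
  obtain ⟨u, hu, rfl⟩ := hv
  exact ⟨u, hu, hvT⟩
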